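/- Let ψ_r(t):=√2·sin((r−1/2)πt) for r=1,2,… and t∈[0,1] (the orthonormal eigenfunctions of the covariance operator of a standard Brownian motion on [0,1]). For t∈(0,1) and ε>0, let C(t,ε,[0,1]) denote the set of all continuous functions f∈L²([0,1]) with f(t)=sup_{s∈[0,1]}f(s)=1 and f(s)=0 for s∉[t−ε,t+ε]. Then for every t∈(0,1) there exists ε_t>0 such that for every 0<ε<ε_t: lim_{k→∞} inf_{f∈C(t,ε,[0,1])} sup_{s∈[0,1]} |f(s) − Σ_{r=1}^k ⟨f,ψ_r⟩ψ_r(s)| = 0, where ⟨f,ψ_r⟩=∫_0^1 f(u)ψ_r(u)du. -/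

import Mathlib

open MeasureTheory

/-- The orthonormal eigenfunctions of the covariance operator of a standard Brownian
motion on `[0,1]`: `ψ_r(t) = √2 sin((r - 1/2) π t)`, `r = 1, 2, …`. -/
noncomputable def psiBM (r : ℕ) (t : ℝ) : ℝ :=
  Real.sqrt 2 * Real.sin (((r : ℝ) - 1 / 2) * Real.pi * t)

namespace BMaux

open Real Set intervalIntegral

noncomputable def phiB (t ε u : ℝ) : ℝ := (1 + Real.cos (π / ε * (u - t))) / 2

noncomputable def fB (t ε u : ℝ) : ℝ := phiB t ε (max (t - ε) (min (t + ε) u))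

variable {t ε : ℝ}

lemma phiB_nonneg (u : ℝ) : 0 ≤ phiB t ε u := by
  have := Real.neg_one_le_cos (π / ε * (u - t)); unfold phiB; linarith

lemma phiB_le_one (u : ℝ) : phiB t ε u ≤ 1 := by
  have := Real.cos_le_one (π / ε * (u - t)); unfold phiB; linarith

lemma phiB_left (hε : 0 < ε) : phiB t ε (t - ε) = 0 := by
  unfold phiB
  have h : π / ε * (t - ε - t) = -π := by field_simp; ring
  rw [h, Real.cos_neg, Real.cos_pi]; norm_num

lemma phiB_right (hε : 0 < ε) : phiB t ε (t + ε) = 0 := by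
  unfold phiB
  have h : π / ε * (t + ε - t) = π := by field_simp; ring
  rw [h, Real.cos_pi]; norm_num

lemma fB_self (hε : 0 < ε) : fB t ε t = 1 := by
  unfold fB
  rw [min_eq_right (by linarith), max_eq_right (by linarith)]
  unfold phiB
  rw [sub_self, mul_zero, Real.cos_zero]; norm_num

lemma fB_nonneg (u : ℝ) : 0 ≤ fB t ε u := phiB_nonneg _

lemma fB_le_one (u : ℝ) : fB t ε u ≤ 1 := phiB_le_one _

lemma fB_zero_left (hε : 0 < ε) {u : ℝ} (hu : u ≤ t - ε) : fB t ε u = 0 := by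
  unfold fB
  rw [min_eq_right (by linarith), max_eq_left hu, phiB_left hε]

lemma fB_zero_right (hε : 0 < ε) {u : ℝ} (hu : t + ε ≤ u) : fB t ε u = 0 := by
  unfold fB
  rw [min_eq_left hu, max_eq_right (by linarith), phiB_right hε]

lemma fB_eq_zero (hε : 0 < ε) {u : ℝ} (hu : u ∉ Icc (t - ε) (t + ε)) : fB t ε u = 0 := by
  rcases not_and_or.mp hu with h | h
  · exact fB_zero_left hε (le_of_lt (not_le.mp h))
  · exact fB_zero_right hε (le_of_lt (not_le.mp h))

lemma fB_eqOn {u : ℝ} (hu : u ∈ Icc (t - ε) (t + ε)) : fB t ε u = phiB t ε u := by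
  unfold fB
  rw [min_eq_right hu.2, max_eq_right hu.1]

lemma phiB_continuous : Continuous (phiB t ε) := by unfold phiB; fun_prop

lemma fB_continuous : Continuous (fB t ε) := by
  unfold fB
  exact phiB_continuous.comp (continuous_const.max (continuous_const.min continuous_id))

lemma phiB_hasDeriv (hε : 0 < ε) (u : ℝ) :
    HasDerivAt (phiB t ε) (-(π / ε) * Real.sin (π / ε * (u - t)) / 2) u := by
  have inner : HasDerivAt (fun u : ℝ => π / ε * (u - t)) (π / ε) u := by
    simpa using ((hasDerivAt_id u).sub_const t).const_mul (π / ε)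
  have h1 : HasDerivAt (fun u : ℝ => Real.cos (π / ε * (u - t)))
      (-Real.sin (π / ε * (u - t)) * (π / ε)) u :=
    (Real.hasDerivAt_cos _).comp u inner
  have := (h1.const_add 1).div_const 2
  exact this.congr_deriv (by ring)

lemma phiB_deriv2 (hε : 0 < ε) (u : ℝ) :
    HasDerivAt (fun u => -(π / ε) * Real.sin (π / ε * (u - t)) / 2)
      (-(π / ε) ^ 2 * Real.cos (π / ε * (u - t)) / 2) u := by
  have inner : HasDerivAt (fun u : ℝ => π / ε * (u - t)) (π / ε) u := by
    simpa using ((hasDerivAt_id u).sub_const t).const_mul (π / ε)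
  have h1 : HasDerivAt (fun u : ℝ => Real.sin (π / ε * (u - t)))
      (Real.cos (π / ε * (u - t)) * (π / ε)) u :=
    (Real.hasDerivAt_sin _).comp u inner
  have := (h1.const_mul (-(π / ε))).div_const 2
  exact this.congr_deriv (by ring)

lemma J_bound (hε : 0 < ε) {l : ℝ} (hl : l ≠ 0) :
    |∫ u in (t - ε)..(t + ε), fB t ε u * Real.sin (l * u)| ≤ π ^ 2 / (ε * l ^ 2) := by
  have hab : t - ε ≤ t + ε := by linarith
  have hcong : ∫ u in (t - ε)..(t + ε), fB t ε u * Real.sin (l * u)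
      = ∫ u in (t - ε)..(t + ε), phiB t ε u * Real.sin (l * u) := by
    apply intervalIntegral.integral_congr
    intro u hu
    rw [Set.uIcc_of_le hab] at hu
    simp only [fB_eqOn hu]
  set φ' : ℝ → ℝ := fun u => -(π / ε) * Real.sin (π / ε * (u - t)) / 2 with hφ'
  set φ'' : ℝ → ℝ := fun u => -(π / ε) ^ 2 * Real.cos (π / ε * (u - t)) / 2 with hφ''
  have hφ'cont : Continuous φ' := by rw [hφ']; fun_prop
  have hφ''cont : Continuous φ'' := by rw [hφ'']; fun_prop
  -- first integration by parts
  have hv : ∀ x ∈ Set.uIcc (t - ε) (t + ε),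
      HasDerivAt (fun u => -Real.cos (l * u) / l) (Real.sin (l * x)) x := by
    intro x _
    have inner : HasDerivAt (fun u : ℝ => l * u) l x := by
      simpa using (hasDerivAt_id x).const_mul l
    have h1 := ((Real.hasDerivAt_cos (l * x)).comp x inner).neg.div_const l
    exact h1.congr_deriv (by field_simp)
  have step1 : ∫ u in (t - ε)..(t + ε), phiB t ε u * Real.sin (l * u)
      = (1 / l) * ∫ u in (t - ε)..(t + ε), φ' u * Real.cos (l * u) := by
    rw [intervalIntegral.integral_mul_deriv_eq_deriv_mul
      (fun x _ => phiB_hasDeriv hε x) hv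
      (hφ'cont.intervalIntegrable _ _) ((by fun_prop : Continuous fun u => Real.sin (l * u)).intervalIntegrable _ _)]
    rw [phiB_left hε, phiB_right hε]
    rw [show ∫ u in (t - ε)..(t + ε), φ' u * (-Real.cos (l * u) / l)
        = ∫ u in (t - ε)..(t + ε), (-(1/l)) * (φ' u * Real.cos (l * u)) from
      intervalIntegral.integral_congr (fun u _ => by ring)]
    rw [intervalIntegral.integral_const_mul]
    ring
  have hv2 : ∀ x ∈ Set.uIcc (t - ε) (t + ε),
      HasDerivAt (fun u => Real.sin (l * u) / l) (Real.cos (l * x)) x := by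
    intro x _
    have inner : HasDerivAt (fun u : ℝ => l * u) l x := by
      simpa using (hasDerivAt_id x).const_mul l
    have h1 := ((Real.hasDerivAt_sin (l * x)).comp x inner).div_const l
    exact h1.congr_deriv (by field_simp)
  have hφ'left : φ' (t - ε) = 0 := by
    have h : π / ε * (t - ε - t) = -π := by field_simp; ring
    simp only [hφ']
    rw [h, Real.sin_neg, Real.sin_pi]
    ring
  have hφ'right : φ' (t + ε) = 0 := by
    have h : π / ε * (t + ε - t) = π := by field_simp; ring
    simp only [hφ']
    rw [h, Real.sin_pi]
    ring
  have step2 : ∫ u in (t - ε)..(t + ε), φ' u * Real.cos (l * u)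
      = -(1 / l) * ∫ u in (t - ε)..(t + ε), φ'' u * Real.sin (l * u) := by
    rw [intervalIntegral.integral_mul_deriv_eq_deriv_mul
      (fun x _ => phiB_deriv2 hε x) hv2
      (hφ''cont.intervalIntegrable _ _) ((by fun_prop : Continuous fun u => Real.cos (l * u)).intervalIntegrable _ _)]
    rw [show (∫ x in (t - ε)..(t + ε), -(π / ε) ^ 2 * Real.cos (π / ε * (x - t)) / 2 * (Real.sin (l * x) / l))
        = ∫ u in (t - ε)..(t + ε), (1/l) * (φ'' u * Real.sin (l * u)) from
      intervalIntegral.integral_congr (fun u _ => by simp only [hφ'']; ring),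
      intervalIntegral.integral_const_mul,
      show -(π / ε) * Real.sin (π / ε * (t + ε - t)) / 2 = 0 from hφ'right,
      show -(π / ε) * Real.sin (π / ε * (t - ε - t)) / 2 = 0 from hφ'left]
    ring
  have hbound : |∫ u in (t - ε)..(t + ε), φ'' u * Real.sin (l * u)| ≤ (π / ε) ^ 2 / 2 * (2 * ε) := by
    have := intervalIntegral.norm_integral_le_of_norm_le_const
      (a := t - ε) (b := t + ε) (C := (π / ε) ^ 2 / 2)
      (f := fun u => φ'' u * Real.sin (l * u)) ?_
    · rw [Real.norm_eq_abs] at this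
      convert this using 2
      rw [abs_of_nonneg (by linarith)]
      ring
    · intro x _
      rw [Real.norm_eq_abs, abs_mul, hφ'']
      have h1 : |-(π / ε) ^ 2 * Real.cos (π / ε * (x - t)) / 2| ≤ (π / ε) ^ 2 / 2 := by
        rw [abs_div, abs_mul, abs_neg, abs_pow]
        have := Real.abs_cos_le_one (π / ε * (x - t))
        have hp : |π / ε| ^ 2 = (π / ε) ^ 2 := sq_abs _
        rw [hp]
        rw [abs_of_nonneg (by norm_num : (0:ℝ) ≤ 2)]
        have h2 : (0:ℝ) ≤ (π / ε) ^ 2 := sq_nonneg _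
        calc (π / ε) ^ 2 * |Real.cos (π / ε * (x - t))| / 2
            ≤ (π / ε) ^ 2 * 1 / 2 := by gcongr
          _ = (π / ε) ^ 2 / 2 := by ring
      calc |φ'' x| * |Real.sin (l * x)| ≤ ((π / ε) ^ 2 / 2) * 1 := by
            apply mul_le_mul h1 (Real.abs_sin_le_one _) (abs_nonneg _) (by positivity)
        _ = (π / ε) ^ 2 / 2 := by ring
  rw [hcong, step1, step2]
  rw [abs_mul, abs_mul]
  have hπ := Real.pi_pos
  calc |1 / l| * (|-(1 / l)| * |∫ u in (t - ε)..(t + ε), φ'' u * Real.sin (l * u)|)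
      ≤ |1 / l| * (|-(1 / l)| * ((π / ε) ^ 2 / 2 * (2 * ε))) := by gcongr
    _ = π ^ 2 / (ε * l ^ 2) := by
        rw [abs_neg, abs_div, abs_one]
        rw [div_pow, ← sq_abs l]
        field_simp

section Part2

variable {t ε : ℝ}

open Complex

lemma ext_integral {E : Type*} [NormedAddCommGroup E] [NormedSpace ℝ E]
    (hε : 0 < ε) {h : ℝ → E} (hc : Continuous h) {a b : ℝ}
    (ha : a ≤ t - ε) (hb : t + ε ≤ b) :
    ∫ u in a..b, fB t ε u • h u = ∫ u in (t - ε)..(t + ε), fB t ε u • h u := by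
  have hab : t - ε ≤ t + ε := by linarith
  have hint : ∀ x y : ℝ, IntervalIntegrable (fun u => fB t ε u • h u) volume x y :=
    fun x y => (Continuous.smul fB_continuous hc).intervalIntegrable x y
  have h1 : ∫ u in a..(t - ε), fB t ε u • h u = 0 := by
    calc ∫ u in a..(t - ε), fB t ε u • h u = ∫ _u in a..(t - ε), (0 : E) :=
          intervalIntegral.integral_congr (fun u hu => by
            rw [Set.uIcc_of_le ha] at hu
            rw [fB_zero_left hε hu.2, zero_smul])
      _ = 0 := intervalIntegral.integral_zero
  have h2 : ∫ u in (t + ε)..b, fB t ε u • h u = 0 := by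
    calc ∫ u in (t + ε)..b, fB t ε u • h u = ∫ _u in (t + ε)..b, (0 : E) :=
          intervalIntegral.integral_congr (fun u hu => by
            rw [Set.uIcc_of_le hb] at hu
            rw [fB_zero_right hε hu.1, zero_smul])
      _ = 0 := intervalIntegral.integral_zero
  rw [← intervalIntegral.integral_add_adjacent_intervals (hint a (t - ε)) (hint (t - ε) b),
      ← intervalIntegral.integral_add_adjacent_intervals (hint (t - ε) (t + ε)) (hint (t + ε) b),
      h1, h2]
  abel

noncomputable def gBc (t ε : ℝ) : ℝ → ℂ := fun u =>
  (fB t ε u : ℂ) + (fB t ε (2 - u) : ℂ) - (fB t ε (-u) : ℂ) - (fB t ε (u + 2) : ℂ)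

lemma gBc_continuous : Continuous (gBc t ε) := by
  unfold gBc
  have h := @fB_continuous t ε
  fun_prop

lemma gBc_eq (hε : 0 < ε) (h0 : 0 < t - ε) (h1 : t + ε < 1) {s : ℝ}
    (hs : s ∈ Set.Icc (0:ℝ) 1) : gBc t ε s = (fB t ε s : ℂ) := by
  unfold gBc
  rw [fB_zero_right hε (by linarith [hs.2] : t + ε ≤ 2 - s),
      fB_zero_left hε (by linarith [hs.1] : -s ≤ t - ε),
      fB_zero_right hε (by linarith [hs.1] : t + ε ≤ s + 2)]
  push_cast
  ring

instance fact04 : Fact ((0:ℝ) < 4) := ⟨by norm_num⟩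

lemma gBc_period (hε : 0 < ε) (h0 : 0 < t - ε) (h1 : t + ε < 1) :
    gBc t ε (-2) = gBc t ε (-2 + 4) := by
  have z : ∀ u : ℝ, u ≤ 0 ∨ 1 ≤ u → (fB t ε u : ℂ) = 0 := by
    intro u hu
    rcases hu with h | h
    · rw [fB_zero_left hε (by linarith)]; norm_num
    · rw [fB_zero_right hε (by linarith)]; norm_num
  unfold gBc
  rw [z (-2 : ℝ) (Or.inl (by norm_num)), z ((2:ℝ) - (-2)) (Or.inr (by norm_num)),
      z (-(-2) : ℝ) (Or.inr (by norm_num)), z ((-2:ℝ) + 2) (Or.inl (by norm_num)),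
      z ((-2:ℝ) + 4) (Or.inr (by norm_num)), z ((2:ℝ) - (-2 + 4)) (Or.inl (by norm_num)),
      z (-((-2:ℝ) + 4)) (Or.inl (by norm_num)), z ((-2:ℝ) + 4 + 2) (Or.inr (by norm_num))]

noncomputable def GB (t ε : ℝ) (hε : 0 < ε) (h0 : 0 < t - ε) (h1 : t + ε < 1) :
    C(AddCircle (4:ℝ), ℂ) :=
  ⟨AddCircle.liftIco (4:ℝ) (-2) (gBc t ε),
    AddCircle.liftIco_continuous (gBc_period hε h0 h1) gBc_continuous.continuousOn⟩

noncomputable def Jf (t ε l : ℝ) : ℝ := ∫ u in (t - ε)..(t + ε), fB t ε u * Real.sin (l * u)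

lemma Jf_neg (l : ℝ) : Jf t ε (-l) = - Jf t ε l := by
  unfold Jf
  rw [← intervalIntegral.integral_neg]
  apply intervalIntegral.integral_congr
  intro u _
  simp only
  rw [neg_mul, Real.sin_neg, mul_neg]

lemma Jf_bound (hε : 0 < ε) {l : ℝ} (hl : l ≠ 0) : |Jf t ε l| ≤ π ^ 2 / (ε * l ^ 2) :=
  J_bound hε hl

lemma exp_diff' (θ : ℝ) : Complex.exp (-(θ:ℂ) * Complex.I) - Complex.exp ((θ:ℂ) * Complex.I)
    = -(2 * Complex.I * (Real.sin θ : ℂ)) := by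
  rw [show -(θ:ℂ) * Complex.I = ((-θ : ℝ):ℂ) * Complex.I by push_cast; ring,
      Complex.exp_mul_I, Complex.exp_mul_I, Complex.ofReal_sin, Complex.ofReal_neg,
      Complex.cos_neg, Complex.sin_neg]
  ring

lemma neg_one_zpow_neg (n : ℤ) : (-1 : ℂ) ^ (-n) = (-1) ^ n := by
  rcases Int.even_or_odd n with h | h
  · rw [Even.neg_one_zpow h, Even.neg_one_zpow h.neg]
  · rw [Odd.neg_one_zpow h, Odd.neg_one_zpow h.neg]

lemma fourierCoeff_GB (hε : 0 < ε) (h0 : 0 < t - ε) (h1 : t + ε < 1) (n : ℤ) :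
    fourierCoeff (⇑(GB t ε hε h0 h1)) n
      = (1 - (-1) ^ n) * (-Complex.I / 2) * (Jf t ε (π * n / 2) : ℂ) := by
  have h42 : ⇑(GB t ε hε h0 h1) = AddCircle.liftIco (4:ℝ) (-2) (gBc t ε) := rfl
  rw [h42, fourierCoeff_liftIco_eq, fourierCoeffOn_eq_integral]
  set μ : ℂ := -(↑π * Complex.I * ↑n / 2) with hμ
  -- rewrite the integrand
  have hInteg : (∫ x in (-2:ℝ)..(-2 + 4), (fourier (-n) (x : AddCircle ((-2:ℝ) + 4 - (-2)))) • gBc t ε x)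
      = ∫ x in (-2:ℝ)..(-2 + 4), Complex.exp (μ * x) * gBc t ε x := by
    apply intervalIntegral.integral_congr
    intro x _
    simp only [smul_eq_mul, fourier_coe_apply]
    congr 2
    rw [hμ]
    push_cast
    ring
  rw [hInteg]
  -- continuity helpers
  have cont1 : ∀ (c : ℂ) (w : ℝ → ℝ), Continuous w →
      Continuous (fun x : ℝ => Complex.exp (c * x) * ((fB t ε (w x) : ℝ) : ℂ)) := by
    intro c w hw
    apply Continuous.mul
    · exact Complex.continuous_exp.comp (by fun_prop)
    · exact Complex.continuous_ofReal.comp (fB_continuous.comp hw)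
  have iiA : ∀ (c : ℂ) (a b : ℝ),
      IntervalIntegrable (fun x : ℝ => Complex.exp (c * x) * (fB t ε x : ℂ)) volume a b :=
    fun c a b => (cont1 c _ continuous_id).intervalIntegrable a b
  have ii2 : ∀ a b : ℝ,
      IntervalIntegrable (fun x : ℝ => Complex.exp (μ * x) * (fB t ε (2 - x) : ℂ)) volume a b :=
    fun a b => (cont1 μ _ (by fun_prop)).intervalIntegrable a b
  have ii3 : ∀ a b : ℝ,
      IntervalIntegrable (fun x : ℝ => Complex.exp (μ * x) * (fB t ε (-x) : ℂ)) volume a b :=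
    fun a b => (cont1 μ _ (by fun_prop)).intervalIntegrable a b
  have ii4 : ∀ a b : ℝ,
      IntervalIntegrable (fun x : ℝ => Complex.exp (μ * x) * (fB t ε (x + 2) : ℂ)) volume a b :=
    fun a b => (cont1 μ _ (by fun_prop)).intervalIntegrable a b
  -- split into four pieces
  have hsplit : (∫ x in (-2:ℝ)..(-2 + 4), Complex.exp (μ * x) * gBc t ε x)
      = (∫ x in (-2:ℝ)..(-2 + 4), Complex.exp (μ * x) * (fB t ε x : ℂ))
      + (∫ x in (-2:ℝ)..(-2 + 4), Complex.exp (μ * x) * (fB t ε (2 - x) : ℂ))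
      - (∫ x in (-2:ℝ)..(-2 + 4), Complex.exp (μ * x) * (fB t ε (-x) : ℂ))
      - (∫ x in (-2:ℝ)..(-2 + 4), Complex.exp (μ * x) * (fB t ε (x + 2) : ℂ)) := by
    rw [← intervalIntegral.integral_add (iiA μ _ _) (ii2 _ _),
        ← intervalIntegral.integral_sub ((iiA μ _ _).add (ii2 _ _)) (ii3 _ _),
        ← intervalIntegral.integral_sub (((iiA μ _ _).add (ii2 _ _)).sub (ii3 _ _)) (ii4 _ _)]
    apply intervalIntegral.integral_congr
    intro x _
    unfold gBc
    ring
  rw [hsplit]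
  -- zero-extension of the basic integrals
  have hext : ∀ (c : ℂ) (a b : ℝ), a ≤ t - ε → t + ε ≤ b →
      (∫ x in a..b, Complex.exp (c * x) * (fB t ε x : ℂ))
      = ∫ x in (t - ε)..(t + ε), Complex.exp (c * x) * (fB t ε x : ℂ) := by
    intro c a b ha hb
    have e1 : ∀ y z : ℝ, (∫ x in y..z, Complex.exp (c * x) * (fB t ε x : ℂ))
        = ∫ x in y..z, fB t ε x • Complex.exp (c * x) :=
      fun y z => intervalIntegral.integral_congr fun x _ => by
        rw [Complex.real_smul]; ring
    rw [e1, e1]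
    exact ext_integral hε (by fun_prop) ha hb
  -- the four substitutions
  have hT1 : (∫ x in (-2:ℝ)..(-2 + 4), Complex.exp (μ * x) * (fB t ε x : ℂ))
      = ∫ x in (t - ε)..(t + ε), Complex.exp (μ * x) * (fB t ε x : ℂ) :=
    hext μ (-2) (-2 + 4) (by linarith) (by linarith)
  have hT2 : (∫ x in (-2:ℝ)..(-2 + 4), Complex.exp (μ * x) * (fB t ε (2 - x) : ℂ))
      = Complex.exp (2 * μ) * ∫ x in (t - ε)..(t + ε), Complex.exp (-μ * x) * (fB t ε x : ℂ) := by
    have e1 : (∫ x in (-2:ℝ)..(-2 + 4), Complex.exp (μ * x) * (fB t ε (2 - x) : ℂ))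
        = ∫ x in (-2:ℝ)..(-2 + 4), (fun v : ℝ => Complex.exp (μ * (2 - v : ℝ)) * (fB t ε v : ℂ)) (2 - x) := by
      apply intervalIntegral.integral_congr
      intro x _
      show Complex.exp (μ * x) * (fB t ε (2 - x) : ℂ)
          = Complex.exp (μ * ((2 - (2 - x) : ℝ) : ℂ)) * (fB t ε (2 - x) : ℂ)
      rw [sub_sub_cancel]
    rw [e1, intervalIntegral.integral_comp_sub_left
        (fun v : ℝ => Complex.exp (μ * (2 - v : ℝ)) * (fB t ε v : ℂ)) 2]
    have e2 : ∀ v : ℝ, Complex.exp (μ * (2 - v : ℝ)) * (fB t ε v : ℂ)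
        = Complex.exp (2 * μ) * (Complex.exp (-μ * v) * (fB t ε v : ℂ)) := by
      intro v
      rw [show μ * ((2 - v : ℝ) : ℂ) = 2 * μ + -μ * v by push_cast; ring, Complex.exp_add]
      ring
    rw [intervalIntegral.integral_congr (fun x _ => e2 x), intervalIntegral.integral_const_mul,
        hext (-μ) _ _ (by linarith) (by linarith)]
  have hT3 : (∫ x in (-2:ℝ)..(-2 + 4), Complex.exp (μ * x) * (fB t ε (-x) : ℂ))
      = ∫ x in (t - ε)..(t + ε), Complex.exp (-μ * x) * (fB t ε x : ℂ) := by
    have e1 : (∫ x in (-2:ℝ)..(-2 + 4), Complex.exp (μ * x) * (fB t ε (-x) : ℂ))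
        = ∫ x in (-2:ℝ)..(-2 + 4), (fun v : ℝ => Complex.exp (-μ * v) * (fB t ε v : ℂ)) (-x) := by
      apply intervalIntegral.integral_congr
      intro x _
      show Complex.exp (μ * x) * (fB t ε (-x) : ℂ)
          = Complex.exp (-μ * ((-x : ℝ) : ℂ)) * (fB t ε (-x) : ℂ)
      congr 1
      push_cast
      ring
    rw [e1, intervalIntegral.integral_comp_neg (fun v : ℝ => Complex.exp (-μ * v) * (fB t ε v : ℂ)),
        hext (-μ) _ _ (by linarith) (by linarith)]
  have hT4 : (∫ x in (-2:ℝ)..(-2 + 4), Complex.exp (μ * x) * (fB t ε (x + 2) : ℂ))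
      = Complex.exp (-(2 * μ)) * ∫ x in (t - ε)..(t + ε), Complex.exp (μ * x) * (fB t ε x : ℂ) := by
    have e1 : (∫ x in (-2:ℝ)..(-2 + 4), Complex.exp (μ * x) * (fB t ε (x + 2) : ℂ))
        = ∫ x in (-2:ℝ)..(-2 + 4), (fun v : ℝ => Complex.exp (μ * (v - 2 : ℝ)) * (fB t ε v : ℂ)) (x + 2) := by
      apply intervalIntegral.integral_congr
      intro x _
      show Complex.exp (μ * x) * (fB t ε (x + 2) : ℂ)
          = Complex.exp (μ * ((x + 2 - 2 : ℝ) : ℂ)) * (fB t ε (x + 2) : ℂ)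
      rw [add_sub_cancel_right]
    rw [e1, intervalIntegral.integral_comp_add_right
        (fun v : ℝ => Complex.exp (μ * (v - 2 : ℝ)) * (fB t ε v : ℂ)) 2]
    have e2 : ∀ v : ℝ, Complex.exp (μ * (v - 2 : ℝ)) * (fB t ε v : ℂ)
        = Complex.exp (-(2 * μ)) * (Complex.exp (μ * v) * (fB t ε v : ℂ)) := by
      intro v
      rw [show μ * ((v - 2 : ℝ) : ℂ) = -(2 * μ) + μ * v by push_cast; ring, Complex.exp_add]
      ring
    rw [intervalIntegral.integral_congr (fun x _ => e2 x), intervalIntegral.integral_const_mul,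
        hext μ _ _ (by linarith) (by linarith)]
  rw [hT1, hT2, hT3, hT4]
  -- the exponential constants
  have hw : Complex.exp (2 * μ) = (-1 : ℂ) ^ n := by
    rw [show 2 * μ = ((-n : ℤ) : ℂ) * (↑π * Complex.I) by rw [hμ]; push_cast; ring,
        Complex.exp_int_mul, Complex.exp_pi_mul_I, neg_one_zpow_neg]
  have hw' : Complex.exp (-(2 * μ)) = (-1 : ℂ) ^ n := by
    rw [show -(2 * μ) = (n : ℂ) * (↑π * Complex.I) by rw [hμ]; push_cast; ring,
        Complex.exp_int_mul, Complex.exp_pi_mul_I]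
  rw [hw, hw']
  -- difference of the two base integrals
  have hAB : (∫ x in (t - ε)..(t + ε), Complex.exp (μ * x) * (fB t ε x : ℂ))
      - (∫ x in (t - ε)..(t + ε), Complex.exp (-μ * x) * (fB t ε x : ℂ))
      = -(2 * Complex.I) * (Jf t ε (π * n / 2) : ℂ) := by
    rw [← intervalIntegral.integral_sub (iiA μ _ _) (iiA (-μ) _ _)]
    have key : ∀ x : ℝ, Complex.exp (μ * x) * (fB t ε x : ℂ) - Complex.exp (-μ * x) * (fB t ε x : ℂ)
        = -(2 * Complex.I) * ((fB t ε x * Real.sin (π * (n : ℝ) / 2 * x) : ℝ) : ℂ) := by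
      intro x
      have e1 : μ * x = -((π * (n : ℝ) / 2 * x : ℝ) : ℂ) * Complex.I := by
        rw [hμ]; push_cast; ring
      have e2 : -μ * x = ((π * (n : ℝ) / 2 * x : ℝ) : ℂ) * Complex.I := by
        rw [hμ]; push_cast; ring
      rw [e1, e2, ← sub_mul, exp_diff' (π * (n : ℝ) / 2 * x)]
      push_cast
      ring
    rw [intervalIntegral.integral_congr (fun x _ => key x),
        intervalIntegral.integral_const_mul]
    congr 1
    rw [show Jf t ε (π * (n:ℝ) / 2) = ∫ u in (t - ε)..(t + ε), fB t ε u * Real.sin (π * (n:ℝ) / 2 * u) from rfl]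
    exact intervalIntegral.integral_ofReal
  rw [show (∫ x in (t - ε)..(t + ε), Complex.exp (μ * x) * (fB t ε x : ℂ))
        + (-1:ℂ) ^ n * (∫ x in (t - ε)..(t + ε), Complex.exp (-μ * x) * (fB t ε x : ℂ))
        - (∫ x in (t - ε)..(t + ε), Complex.exp (-μ * x) * (fB t ε x : ℂ))
        - (-1:ℂ) ^ n * (∫ x in (t - ε)..(t + ε), Complex.exp (μ * x) * (fB t ε x : ℂ))
      = (1 - (-1:ℂ) ^ n) * ((∫ x in (t - ε)..(t + ε), Complex.exp (μ * x) * (fB t ε x : ℂ))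
        - (∫ x in (t - ε)..(t + ε), Complex.exp (-μ * x) * (fB t ε x : ℂ))) by ring,
    hAB, Complex.real_smul]
  push_cast
  norm_num
  ring

end Part2

section Part3

variable {t ε : ℝ}

lemma exp_pair (J θ : ℝ) :
    2 * (-Complex.I / 2) * (J:ℂ) * Complex.exp ((θ:ℂ) * Complex.I)
      + 2 * (-Complex.I / 2) * (-(J:ℂ)) * Complex.exp (-(θ:ℂ) * Complex.I)
    = ((2 * J * Real.sin θ : ℝ) : ℂ) := by
  rw [show -(θ:ℂ) * Complex.I = ((-θ:ℝ):ℂ) * Complex.I by push_cast; ring,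
      Complex.exp_mul_I, Complex.exp_mul_I, Complex.ofReal_neg, Complex.cos_neg,
      Complex.sin_neg]
  push_cast [Complex.ofReal_sin]
  linear_combination (-(2:ℂ) * (J:ℂ) * Complex.sin (θ:ℂ)) * Complex.I_sq

lemma summable_coeff (hε : 0 < ε) (h0 : 0 < t - ε) (h1 : t + ε < 1) :
    Summable (fourierCoeff (⇑(GB t ε hε h0 h1))) := by
  apply Summable.of_norm_bounded (g := fun n : ℤ => (4 / ε) * (1 / (n:ℝ) ^ 2))
      (((Real.summable_one_div_int_pow (p := 2)).mpr one_lt_two).mul_left _)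
  intro n
  rcases eq_or_ne n 0 with rfl | hn
  · rw [fourierCoeff_GB hε h0 h1]
    norm_num
  · rw [fourierCoeff_GB hε h0 h1]
    have hnR : (n:ℝ) ≠ 0 := Int.cast_ne_zero.mpr hn
    have hl : π * (n:ℝ) / 2 ≠ 0 := by
      simp only [ne_eq, div_eq_zero_iff, mul_eq_zero]
      push_neg
      exact ⟨⟨Real.pi_ne_zero, hnR⟩, by norm_num⟩
    have hJ := Jf_bound (t := t) hε hl
    rw [norm_mul, norm_mul, Complex.norm_real, Real.norm_eq_abs]
    have h1n : ‖(1 - (-1:ℂ) ^ n)‖ ≤ 2 := by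
      rcases Int.even_or_odd n with h | h
      · rw [Even.neg_one_zpow h]; norm_num
      · rw [Odd.neg_one_zpow h]; norm_num
    have h2n : ‖(-Complex.I / 2)‖ = 1 / 2 := by
      rw [norm_div, norm_neg, Complex.norm_I]
      norm_num
    calc ‖(1 - (-1:ℂ) ^ n)‖ * ‖(-Complex.I / 2)‖ * |Jf t ε (π * (n:ℝ) / 2)|
        ≤ (2 * (1/2)) * (π ^ 2 / (ε * (π * (n:ℝ) / 2) ^ 2)) := by
          apply mul_le_mul _ hJ (abs_nonneg _) (by norm_num)
          rw [h2n]
          gcongr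
      _ = (4 / ε) * (1 / (n:ℝ) ^ 2) := by
          field_simp
          ring

lemma hasSum_fB (hε : 0 < ε) (h0 : 0 < t - ε) (h1 : t + ε < 1) {s : ℝ}
    (hs : s ∈ Set.Icc (0:ℝ) 1) :
    HasSum (fun r : ℕ => 2 * Jf t ε (π * (2 * (r:ℝ) + 1) / 2)
        * Real.sin (π * (2 * (r:ℝ) + 1) / 2 * s)) (fB t ε s) := by
  have H := has_pointwise_sum_fourier_series_of_summable (summable_coeff hε h0 h1)
    ((s : ℝ) : AddCircle (4:ℝ))
  have hGs : (GB t ε hε h0 h1) ((s : ℝ) : AddCircle (4:ℝ)) = (fB t ε s : ℂ) := by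
    show AddCircle.liftIco (4:ℝ) (-2) (gBc t ε) ((s : ℝ) : AddCircle (4:ℝ)) = _
    rw [AddCircle.liftIco_coe_apply
      (⟨by linarith [hs.1], by linarith [hs.2]⟩ : s ∈ Set.Ico (-2:ℝ) (-2 + 4))]
    exact gBc_eq hε h0 h1 hs
  rw [hGs] at H
  have H2 := H.nat_add_neg
  have hc0 : fourierCoeff (⇑(GB t ε hε h0 h1)) ((0:ℕ):ℤ) = 0 := by
    rw [fourierCoeff_GB hε h0 h1]
    norm_num
  rw [show (((0:ℕ):ℤ)) = (0:ℤ) by norm_num] at hc0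
  rw [hc0, zero_smul, add_zero] at H2
  -- reindex over odd integers
  have inj : Function.Injective (fun r : ℕ => 2 * r + 1) := by
    intro a b hab
    have h2 : 2 * a + 1 = 2 * b + 1 := hab
    omega
  have vanish : ∀ m ∉ Set.range (fun r : ℕ => 2 * r + 1),
      (fourierCoeff (⇑(GB t ε hε h0 h1)) ((m:ℕ):ℤ)) • fourier ((m:ℕ):ℤ) ((s:ℝ) : AddCircle (4:ℝ))
        + (fourierCoeff (⇑(GB t ε hε h0 h1)) (-((m:ℕ):ℤ)))
          • fourier (-((m:ℕ):ℤ)) ((s:ℝ) : AddCircle (4:ℝ)) = 0 := by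
    intro m hm
    have hmeven : Even m := by
      rcases Nat.even_or_odd m with h | h
      · exact h
      · exact absurd (h.rec fun j hj => ⟨j, hj.symm⟩) hm
    have hz : Even ((m:ℕ):ℤ) := Int.even_coe_nat m |>.mpr hmeven
    rw [fourierCoeff_GB hε h0 h1, fourierCoeff_GB hε h0 h1, Even.neg_one_zpow hz,
        neg_one_zpow_neg, Even.neg_one_zpow hz]
    norm_num
  have H3 := (Function.Injective.hasSum_iff inj vanish).mpr H2
  have hterm : ∀ r : ℕ,
      (fourierCoeff (⇑(GB t ε hε h0 h1)) (((2*r+1:ℕ)):ℤ)) • fourier (((2*r+1:ℕ)):ℤ) ((s:ℝ) : AddCircle (4:ℝ))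
        + (fourierCoeff (⇑(GB t ε hε h0 h1)) (-(((2*r+1:ℕ)):ℤ)))
          • fourier (-(((2*r+1:ℕ)):ℤ)) ((s:ℝ) : AddCircle (4:ℝ))
      = ((2 * Jf t ε (π * (2 * (r:ℝ) + 1) / 2)
          * Real.sin (π * (2 * (r:ℝ) + 1) / 2 * s) : ℝ) : ℂ) := by
    intro r
    have hodd : Odd (((2*r+1:ℕ)):ℤ) := ⟨r, by push_cast; ring⟩
    rw [fourierCoeff_GB hε h0 h1, fourierCoeff_GB hε h0 h1, Odd.neg_one_zpow hodd,
        neg_one_zpow_neg, Odd.neg_one_zpow hodd, fourier_coe_apply, fourier_coe_apply]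
    have hJp : Jf t ε (π * ((((2*r+1:ℕ)):ℤ):ℝ) / 2) = Jf t ε (π * (2 * (r:ℝ) + 1) / 2) := by
      congr 1
      push_cast
      ring
    have hJn : Jf t ε (π * (((-((2*r+1:ℕ):ℤ)):ℤ):ℝ) / 2) = - Jf t ε (π * (2 * (r:ℝ) + 1) / 2) := by
      rw [show (π * (((-((2*r+1:ℕ):ℤ)):ℤ):ℝ) / 2) = -(π * (2 * (r:ℝ) + 1) / 2) by push_cast; ring,
          Jf_neg]
    rw [hJp, hJn]
    have hE1 : (2 * ↑π * Complex.I * ((((2*r+1:ℕ)):ℤ):ℂ) * (s:ℂ) / ((4:ℝ):ℂ))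
        = ((π * (2 * (r:ℝ) + 1) / 2 * s : ℝ) : ℂ) * Complex.I := by
      push_cast
      ring
    have hE2 : (2 * ↑π * Complex.I * (Int.cast (-(((2*r+1:ℕ)):ℤ)) : ℂ) * (s:ℂ) / ((4:ℝ):ℂ))
        = -((π * (2 * (r:ℝ) + 1) / 2 * s : ℝ) : ℂ) * Complex.I := by
      push_cast
      ring
    rw [hE1, hE2, smul_eq_mul, smul_eq_mul]
    push_cast
    rw [show (1:ℂ) - -1 = 2 by norm_num]
    have hp := exp_pair (Jf t ε (π * (2 * (r:ℝ) + 1) / 2)) (π * (2 * (r:ℝ) + 1) / 2 * s)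
    push_cast at hp ⊢
    linear_combination hp
  apply Complex.hasSum_ofReal.mp
  have heq : (fun r : ℕ => (((2 * Jf t ε (π * (2 * (r:ℝ) + 1) / 2)
        * Real.sin (π * (2 * (r:ℝ) + 1) / 2 * s)) : ℝ) : ℂ))
      = (fun x : ℕ => fourierCoeff (⇑(GB t ε hε h0 h1)) ((x:ℕ):ℤ)
            • fourier ((x:ℕ):ℤ) ((s:ℝ) : AddCircle (4:ℝ))
          + fourierCoeff (⇑(GB t ε hε h0 h1)) (-((x:ℕ):ℤ))
            • fourier (-((x:ℕ):ℤ)) ((s:ℝ) : AddCircle (4:ℝ))) ∘ (fun r : ℕ => 2 * r + 1) :=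
    funext fun r => (hterm r).symm
  rw [heq]
  exact H3

lemma psiBM_continuous (r : ℕ) : Continuous (psiBM r) := by
  unfold psiBM
  fun_prop

end Part3

end BMaux

/-- the Karhunen–Loève basis of the standard Brownian motion satisfies the
approximation condition (2.4) of Theorem 2: for every `t ∈ (0,1)` there is `ε_t > 0`
such that for every `0 < ε < ε_t`,
`lim_{k→∞} inf_{f ∈ C(t,ε,[0,1])} sup_{s∈[0,1]} |f(s) - Σ_{r=1}^k ⟨f,ψ_r⟩ψ_r(s)| = 0`
(the limit being expressed in quantifier form). -/
theorem brownian_eigenfunctions_approximation :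
    ∀ t ∈ Set.Ioo (0 : ℝ) 1, ∃ εt > 0, ∀ ε, 0 < ε → ε < εt →
      ∀ η > 0, ∃ K : ℕ, ∀ k ≥ K, ∃ f : ℝ → ℝ,
        (ContinuousOn f (Set.Icc (0 : ℝ) 1) ∧ f t = 1 ∧
          (∀ s ∈ Set.Icc (0 : ℝ) 1, f s ≤ 1) ∧
          (∀ s ∈ Set.Icc (0 : ℝ) 1, s ∉ Set.Icc (t - ε) (t + ε) → f s = 0)) ∧
        (∀ s ∈ Set.Icc (0 : ℝ) 1,
          |f s - ∑ r ∈ Finset.Icc 1 k,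
            (∫ u in Set.Icc (0 : ℝ) 1, f u * psiBM r u) * psiBM r s| ≤ η) := by
  rintro t ⟨ht0, ht1⟩
  refine ⟨min t (1 - t), lt_min ht0 (by linarith), ?_⟩
  intro ε hε hεt η hη
  have h0 : 0 < t - ε := by
    have := lt_of_lt_of_le hεt (min_le_left _ _); linarith
  have h1 : t + ε < 1 := by
    have := lt_of_lt_of_le hεt (min_le_right _ _); linarith
  set b : ℕ → ℝ := fun r => (8 / ε) * (1 / ((r:ℝ) + 1) ^ 2) with hbdef
  have hbsum : Summable b := by
    have h2 : Summable (fun r : ℕ => 1 / ((r:ℝ) + 1) ^ 2) := by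
      have h3 := (summable_nat_add_iff (f := fun n : ℕ => 1 / (n:ℝ) ^ 2) 1).mpr
        ((Real.summable_one_div_nat_pow (p := 2)).mpr one_lt_two)
      refine h3.congr fun n => ?_
      push_cast
      ring
    exact h2.mul_left _
  obtain ⟨K, hK⟩ := Filter.eventually_atTop.mp
    ((tendsto_sum_nat_add b).eventually_lt_const hη)
  refine ⟨K, fun k hk => ?_⟩
  refine ⟨BMaux.fB t ε, ⟨BMaux.fB_continuous.continuousOn, BMaux.fB_self hε,
    fun s _ => BMaux.fB_le_one s, fun s _ hs => BMaux.fB_eq_zero hε hs⟩, ?_⟩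
  intro s hs
  set g : ℕ → ℝ := fun r => (∫ u in Set.Icc (0:ℝ) 1, BMaux.fB t ε u * psiBM (1 + r) u)
      * psiBM (1 + r) s with hgdef
  have ha : ∀ r : ℕ, (∫ u in Set.Icc (0:ℝ) 1, BMaux.fB t ε u * psiBM r u)
      = Real.sqrt 2 * BMaux.Jf t ε (((r:ℝ) - 1/2) * Real.pi) := by
    intro r
    rw [MeasureTheory.integral_Icc_eq_integral_Ioc,
        ← intervalIntegral.integral_of_le (by norm_num : (0:ℝ) ≤ 1)]
    rw [show (∫ u in (0:ℝ)..1, BMaux.fB t ε u * psiBM r u)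
        = ∫ u in (0:ℝ)..1, BMaux.fB t ε u • psiBM r u from
      intervalIntegral.integral_congr fun u _ => by rw [smul_eq_mul]]
    rw [BMaux.ext_integral hε (BMaux.psiBM_continuous r) (by linarith) (by linarith)]
    rw [show (∫ u in (t - ε)..(t + ε), BMaux.fB t ε u • psiBM r u)
        = ∫ u in (t - ε)..(t + ε), Real.sqrt 2
          * (BMaux.fB t ε u * Real.sin ((((r:ℝ) - 1/2) * Real.pi) * u)) from
      intervalIntegral.integral_congr fun u _ => by
        simp only [psiBM, smul_eq_mul]; ring]
    rw [intervalIntegral.integral_const_mul]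
    rfl
  have hang : ∀ r : ℕ, (((1 + r : ℕ):ℝ) - 1/2) * Real.pi = Real.pi * (2 * (r:ℝ) + 1) / 2 := by
    intro r; push_cast; ring
  have h22 : Real.sqrt 2 * Real.sqrt 2 = 2 := Real.mul_self_sqrt (by norm_num)
  have hterm : ∀ r : ℕ, g r = 2 * BMaux.Jf t ε (Real.pi * (2 * (r:ℝ) + 1) / 2)
      * Real.sin (Real.pi * (2 * (r:ℝ) + 1) / 2 * s) := by
    intro r
    rw [hgdef]
    simp only
    rw [ha (1 + r)]
    simp only [psiBM]
    rw [hang r]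
    linear_combination (BMaux.Jf t ε (Real.pi * (2 * (r:ℝ) + 1) / 2)
      * Real.sin (Real.pi * (2 * (r:ℝ) + 1) / 2 * s)) * h22
  have H : HasSum g (BMaux.fB t ε s) := by
    rw [show g = _ from funext hterm]
    exact BMaux.hasSum_fB hε h0 h1 hs
  have hb : ∀ r : ℕ, |g r| ≤ b r := by
    intro r
    rw [hterm r, hbdef]
    have hπ := Real.pi_pos
    have hr0 : (0:ℝ) ≤ (r:ℝ) := Nat.cast_nonneg r
    have hl : Real.pi * (2 * (r:ℝ) + 1) / 2 ≠ 0 := ne_of_gt (by positivity)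
    have hJ := BMaux.Jf_bound (t := t) hε hl
    rw [abs_mul, abs_mul, abs_two]
    calc 2 * |BMaux.Jf t ε (Real.pi * (2 * (r:ℝ) + 1) / 2)|
          * |Real.sin (Real.pi * (2 * (r:ℝ) + 1) / 2 * s)|
        ≤ (2 * (Real.pi ^ 2 / (ε * (Real.pi * (2 * (r:ℝ) + 1) / 2) ^ 2))) * 1 := by
          apply mul_le_mul _ (Real.abs_sin_le_one _) (abs_nonneg _) (by positivity)
          gcongr
      _ = 2 * Real.pi ^ 2 / (ε * (Real.pi * (2 * (r:ℝ) + 1) / 2) ^ 2) := by ring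
      _ ≤ (8 / ε) * (1 / ((r:ℝ) + 1) ^ 2) := by
          rw [show (8 / ε) * (1 / ((r:ℝ) + 1) ^ 2) = 8 / (ε * ((r:ℝ) + 1) ^ 2) by
            rw [div_mul_div_comm]; norm_num,
              div_le_div_iff₀ (by positivity) (by positivity)]
          nlinarith [mul_nonneg (mul_nonneg hε.le (sq_nonneg Real.pi)) hr0,
            mul_nonneg (mul_nonneg (mul_nonneg hε.le (sq_nonneg Real.pi)) hr0) hr0]
  have hsum := H.summable
  have hpart : ∑ r ∈ Finset.Icc 1 k, (∫ u in Set.Icc (0:ℝ) 1, BMaux.fB t ε u * psiBM r u)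
        * psiBM r s
      = ∑ r ∈ Finset.range k, g r := by
    rw [← Finset.Ico_add_one_right_eq_Icc, Finset.sum_Ico_eq_sum_range]
    simp [hgdef]
  rw [hpart]
  have key := Summable.sum_add_tsum_nat_add (f := g) k hsum
  rw [H.tsum_eq] at key
  have hdiff : BMaux.fB t ε s - ∑ r ∈ Finset.range k, g r = ∑' i, g (i + k) := by
    linarith
  rw [hdiff]
  have hbs : Summable (fun i => b (i + k)) := (summable_nat_add_iff k).mpr hbsum
  have hgs : Summable (fun i => |g (i + k)|) :=
    Summable.of_nonneg_of_le (fun i => abs_nonneg _) (fun i => hb (i + k)) hbs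
  calc |∑' i, g (i + k)| ≤ ∑' i, |g (i + k)| := by
        simpa [Real.norm_eq_abs] using
          norm_tsum_le_tsum_norm (f := fun i => g (i + k)) (by simpa [Real.norm_eq_abs] using hgs)
    _ ≤ ∑' i, b (i + k) := Summable.tsum_le_tsum (fun i => hb (i + k)) hgs hbs
    _ ≤ η := le_of_lt (hK k hk)
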